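/- Let G = (V, E) be a finite graph and let V_STAB be the set of all stable sets of G. Define the graph G_STAB on V_STAB by joining two distinct stable sets s, t by an edge if and only if the induced subgraph G[s △ t] is connected (Chvátal's characterization of the graph of the stable set polytope STAB(G)). Then there exists a neighbourly abstract cubical complex K = (V_STAB, 𝒞) whose graph is G_STAB; explicitly, one may take 𝒞 = { c_{st} : s, t ∈ V_STAB }, where c_{st} = { s △ (⋃_{j ∈ J} A_j) : J ⊆ {1, …, k} } and A_1, …, A_k are the vertex sets of the connected components of G[s △ t]. -/

import Mathlib

/-- A subset of the vertex set of the cube `{0,1}^d` is a *face* if it is obtained by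
fixing some set of coordinates to constant values. -/
def IsCubeFace {d : ℕ} (s : Set (Fin d → Bool)) : Prop :=
  ∃ (S : Set (Fin d)) (a : Fin d → Bool), s = {x | ∀ j ∈ S, x j = a j}

/-- An abstract cubical complex on a vertex set `V`: a collection of "cubes" that is
closed under pairwise intersection (up to the empty set), each cube being in bijection
with some `{0,1}^d` in such a way that the subcubes of the complex contained in it
correspond exactly to the faces of `{0,1}^d`. -/
structure AbstractCubicalComplex (V : Type*) where
  cubes : Set (Set V)
  inter_closed : ∀ c₁ ∈ cubes, ∀ c₂ ∈ cubes, c₁ ∩ c₂ = ∅ ∨ c₁ ∩ c₂ ∈ cubes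
  cube_structure : ∀ c ∈ cubes, ∃ (d : ℕ) (φ : (Fin d → Bool) → V),
    Function.Injective φ ∧ Set.range φ = c ∧
    ∀ s : Set (Fin d → Bool), φ '' s ∈ cubes ↔ IsCubeFace s

/-- A cubical complex is neighbourly if every pair of vertices lies in a common cube. -/
def IsNeighbourly {V : Type*} (K : AbstractCubicalComplex V) : Prop :=
  ∀ v w : V, ∃ c ∈ K.cubes, v ∈ c ∧ w ∈ c

/-- The graph of an abstract cubical complex: two vertices are adjacent iff they form
a 1-dimensional cube of the complex. -/
def complexGraph {V : Type*} (K : AbstractCubicalComplex V) : SimpleGraph V where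
  Adj v w := v ≠ w ∧ ({v, w} : Set V) ∈ K.cubes
  symm := by
    constructor
    intro v w h
    exact ⟨h.1.symm, Set.pair_comm v w ▸ h.2⟩
  loopless := by
    constructor
    intro v h
    exact h.1 rfl

/-- A stable (independent) set of a graph: a set of vertices no two of which are
adjacent. -/
def IsStableSet {V : Type*} (G : SimpleGraph V) (s : Set V) : Prop :=
  ∀ v ∈ s, ∀ w ∈ s, ¬ G.Adj v w

/-- The graph of the stable set polytope `STAB(G)` (by Chvátal's characterization):
vertices are the stable sets of `G`, two distinct stable sets being adjacent iff the
induced subgraph on their symmetric difference is connected. -/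
def stableSetGraph {V : Type*} (G : SimpleGraph V) :
    SimpleGraph {s : Set V // IsStableSet G s} where
  Adj s t := s ≠ t ∧ (G.induce (symmDiff s.1 t.1)).Connected
  symm := by
    constructor
    intro s t h
    exact ⟨h.1.symm, symmDiff_comm s.1 t.1 ▸ h.2⟩
  loopless := by
    constructor
    intro s h
    exact h.1 rfl

/-- The cube `c_{st}` spanned by two stable sets `s, t`: the stable sets of the form
`s △ (⋃_{j ∈ J} A j)` where the `A j` range over unions of connected components of
`G[s △ t]`. -/
def stabCube {V : Type*} (G : SimpleGraph V) (s t : Set V) : Set (Set V) :=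
  {u | ∃ S : Set ((G.induce (symmDiff s t)).ConnectedComponent),
    u = symmDiff s (Subtype.val '' (⋃ C ∈ S, C.supp))}


open SimpleGraph

section Aux
variable {V : Type*} (G : SimpleGraph V)

/-- `X` is a union of connected components of `G[D]`, characterized by closure. -/
def Clo (D X : Set V) : Prop :=
  X ⊆ D ∧ ∀ ⦃v w : V⦄ (hv : v ∈ D) (hw : w ∈ D), v ∈ X →
    (G.induce D).Reachable ⟨v, hv⟩ ⟨w, hw⟩ → w ∈ X

variable {G}

lemma clo_empty {D : Set V} : Clo G D (∅ : Set V) :=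
  ⟨Set.empty_subset _, fun _ _ _ _ h _ => h.elim⟩

lemma clo_self {D : Set V} : Clo G D D :=
  ⟨le_refl _, fun _ _ _ hw _ _ => hw⟩

lemma Clo.symmDiff {D X Y : Set V} (hX : Clo G D X) (hY : Clo G D Y) :
    Clo G D (symmDiff X Y) := by
  constructor
  · intro v hv
    rcases Set.mem_symmDiff.mp hv with ⟨h, _⟩ | ⟨h, _⟩
    exacts [hX.1 h, hY.1 h]
  · intro v w hv hw hvX hr
    rcases Set.mem_symmDiff.mp hvX with ⟨h1, h2⟩ | ⟨h1, h2⟩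
    · refine Set.mem_symmDiff.mpr (Or.inl ⟨hX.2 hv hw h1 hr, fun hwY => h2 ?_⟩)
      exact hY.2 hw hv hwY hr.symm
    · refine Set.mem_symmDiff.mpr (Or.inr ⟨hY.2 hv hw h1 hr, fun hwX => h2 ?_⟩)
      exact hX.2 hw hv hwX hr.symm

lemma clo_sUnion {D : Set V} {𝒮 : Set (Set V)} (h : ∀ X ∈ 𝒮, Clo G D X) :
    Clo G D (⋃₀ 𝒮) := by
  constructor
  · intro v hv
    rcases hv with ⟨X, hX, hvX⟩
    exact (h X hX).1 hvX
  · intro v w hv hw hvX hr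
    rcases hvX with ⟨X, hX, hvX⟩
    exact ⟨X, hX, (h X hX).2 hv hw hvX hr⟩

/-- Walks in `G[X]` map to walks in `G[D]` when `X ⊆ D`. -/
lemma reach_mono {D X : Set V} (hXD : X ⊆ D) {v w : V} (hv : v ∈ X) (hw : w ∈ X)
    (h : (G.induce X).Reachable ⟨v, hv⟩ ⟨w, hw⟩) :
    (G.induce D).Reachable ⟨v, hXD hv⟩ ⟨w, hXD hw⟩ := by
  let f : G.induce X →g G.induce D :=
    ⟨fun a => ⟨a.1, hXD a.2⟩, fun {a b} hab => hab⟩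
  exact h.map f

/-- Walks in `G[D]` starting in a `Clo`-set `X` stay in `X` and give walks in `G[X]`. -/
lemma walk_clo {D X : Set V} (hX : Clo G D X) {a b : ↥D} (p : (G.induce D).Walk a b)
    (ha : a.1 ∈ X) : ∃ hb : b.1 ∈ X, (G.induce X).Reachable ⟨a.1, ha⟩ ⟨b.1, hb⟩ := by
  induction p with
  | nil => exact ⟨ha, Reachable.refl _⟩
  | @cons a m b h p ih =>
    have hm : m.1 ∈ X := hX.2 a.2 m.2 ha h.reachable
    obtain ⟨hb, hr⟩ := ih hm
    refine ⟨hb, Reachable.trans (Adj.reachable ?_) hr⟩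
    exact (h : G.Adj a.1 m.1)

lemma clo_trans {D X Y : Set V} (hX : Clo G D X) :
    Clo G X Y ↔ Y ⊆ X ∧ Clo G D Y := by
  constructor
  · rintro ⟨hYX, hcl⟩
    refine ⟨hYX, hYX.trans hX.1, ?_⟩
    intro v w hv hw hvY hr
    obtain ⟨p⟩ := hr
    obtain ⟨hwX, hr'⟩ := walk_clo hX p (hYX hvY)
    exact hcl (hYX hvY) hwX hvY hr'
  · rintro ⟨hYX, hYD⟩
    refine ⟨hYX, ?_⟩
    intro v w hv hw hvY hr
    exact hYD.2 (hX.1 hv) (hX.1 hw) hvY (reach_mono hX.1 hv hw hr)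

lemma mem_unionSupp {D : Set V} {S : Set ((G.induce D).ConnectedComponent)} {v : V} :
    v ∈ Subtype.val '' (⋃ C ∈ S, SimpleGraph.ConnectedComponent.supp C) ↔
      ∃ hv : v ∈ D, (G.induce D).connectedComponentMk ⟨v, hv⟩ ∈ S := by
  constructor
  · rintro ⟨x, hx, rfl⟩
    simp only [Set.mem_iUnion] at hx
    obtain ⟨C, hC, hxC⟩ := hx
    exact ⟨x.2, by rwa [(ConnectedComponent.mem_supp_iff C x).mp hxC]⟩
  · rintro ⟨hv, hS⟩
    refine ⟨⟨v, hv⟩, ?_, rfl⟩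
    simp only [Set.mem_iUnion]
    exact ⟨_, hS, (ConnectedComponent.mem_supp_iff _ _).mpr rfl⟩

lemma clo_unionSupp {D : Set V} (S : Set ((G.induce D).ConnectedComponent)) :
    Clo G D (Subtype.val '' (⋃ C ∈ S, SimpleGraph.ConnectedComponent.supp C)) := by
  constructor
  · intro v hv; exact (mem_unionSupp.mp hv).1
  · intro v w hv hw hvX hr
    obtain ⟨hv', hS⟩ := mem_unionSupp.mp hvX
    refine mem_unionSupp.mpr ⟨hw, ?_⟩
    rwa [ConnectedComponent.eq.mpr hr.symm]

lemma Clo.exists_S {D X : Set V} (hX : Clo G D X) :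
    ∃ S : Set ((G.induce D).ConnectedComponent),
      X = Subtype.val '' (⋃ C ∈ S, SimpleGraph.ConnectedComponent.supp C) := by
  refine ⟨{C | ∃ v : ↥D, (G.induce D).connectedComponentMk v = C ∧ v.1 ∈ X}, ?_⟩
  ext v
  rw [mem_unionSupp]
  constructor
  · intro hv
    exact ⟨hX.1 hv, ⟨v, hX.1 hv⟩, rfl, hv⟩
  · rintro ⟨hv, x, hmk, hxX⟩
    exact hX.2 x.2 hv hxX (ConnectedComponent.eq.mp hmk)

lemma clo_iff_exists_S {D X : Set V} :
    Clo G D X ↔ ∃ S : Set ((G.induce D).ConnectedComponent),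
      X = Subtype.val '' (⋃ C ∈ S, SimpleGraph.ConnectedComponent.supp C) := by
  refine ⟨Clo.exists_S, ?_⟩
  rintro ⟨S, rfl⟩
  exact clo_unionSupp S

lemma mem_stabCube_iff {s t u : Set V} :
    u ∈ stabCube G s t ↔ Clo G (symmDiff s t) (symmDiff s u) := by
  rw [clo_iff_exists_S]
  constructor
  · rintro ⟨S, rfl⟩
    exact ⟨S, by rw [symmDiff_symmDiff_cancel_left]⟩
  · rintro ⟨S, hS⟩
    exact ⟨S, by rw [← hS, symmDiff_symmDiff_cancel_left]⟩

/-- Stability is preserved along cubes. -/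
lemma stable_clo {s t X : Set V} (hs : IsStableSet G s) (ht : IsStableSet G t)
    (hX : Clo G (symmDiff s t) X) : IsStableSet G (symmDiff s X) := by
  set D := symmDiff s t with hD
  intro v hv w hw hadj
  rcases Set.mem_symmDiff.mp hv with ⟨hvs, hvX⟩ | ⟨hvX, hvs⟩ <;>
    rcases Set.mem_symmDiff.mp hw with ⟨hws, hwX⟩ | ⟨hwX, hws⟩
  · exact hs v hvs w hws hadj
  · -- v ∈ s \ X, w ∈ X \ s
    have hwD : w ∈ D := hX.1 hwX
    by_cases hvD : v ∈ D
    · exact hvX (hX.2 hwD hvD hwX (Adj.reachable (by exact hadj.symm : (G.induce D).Adj ⟨w, hwD⟩ ⟨v, hvD⟩)))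
    · have hvt : v ∈ t := by
        by_contra hvt
        exact hvD (Set.mem_symmDiff.mpr (Or.inl ⟨hvs, hvt⟩))
      have hwt : w ∈ t := by
        rcases Set.mem_symmDiff.mp hwD with ⟨h1, _⟩ | ⟨h, _⟩
        · exact absurd h1 hws
        · exact h
      exact ht v hvt w hwt hadj
  · -- symmetric
    have hvD : v ∈ D := hX.1 hvX
    by_cases hwD : w ∈ D
    · exact hwX (hX.2 hvD hwD hvX (Adj.reachable (by exact hadj : (G.induce D).Adj ⟨v, hvD⟩ ⟨w, hwD⟩)))
    · have hwt : w ∈ t := by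
        by_contra hwt
        exact hwD (Set.mem_symmDiff.mpr (Or.inl ⟨hws, hwt⟩))
      have hvt : v ∈ t := by
        rcases Set.mem_symmDiff.mp hvD with ⟨h1, _⟩ | ⟨h, _⟩
        · exact absurd h1 hvs
        · exact h
      exact ht v hvt w hwt hadj
  · have hvt : v ∈ t := by
      have hvD : v ∈ D := hX.1 hvX
      rcases Set.mem_symmDiff.mp hvD with ⟨h1, _⟩ | ⟨h, _⟩
      · exact absurd h1 hvs
      · exact h
    have hwt : w ∈ t := by
      have hwD : w ∈ D := hX.1 hwX
      rcases Set.mem_symmDiff.mp hwD with ⟨h1, _⟩ | ⟨h, _⟩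
      · exact absurd h1 hws
      · exact h
    exact ht v hvt w hwt hadj

/-- set algebra helpers -/
lemma sd_cancel (a x y : Set V) :
    symmDiff (symmDiff a x) (symmDiff a y) = symmDiff x y := by
  ext v; simp only [Set.mem_symmDiff]; tauto

lemma sd_rot (s u w : Set V) :
    symmDiff s w = symmDiff (symmDiff s u) (symmDiff u w) := by
  ext v; simp only [Set.mem_symmDiff]; tauto

lemma sd_assoc' (s x y : Set V) :
    symmDiff (symmDiff s x) y = symmDiff s (symmDiff x y) := by
  ext v; simp only [Set.mem_symmDiff]; tauto

lemma clo_reachClass {D : Set V} {d : V} (hd : d ∈ D) :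
    Clo G D {x | ∃ hx : x ∈ D, (G.induce D).Reachable ⟨d, hd⟩ ⟨x, hx⟩} := by
  constructor
  · rintro x ⟨hx, _⟩; exact hx
  · rintro v w hv hw ⟨hv', hr⟩ hr'
    exact ⟨hw, hr.trans hr'⟩

lemma clo_eq_of_connected {D X : Set V} (hc : (G.induce D).Connected)
    (hX : Clo G D X) : X = ∅ ∨ X = D := by
  rcases Set.eq_empty_or_nonempty X with h | ⟨x, hx⟩
  · exact Or.inl h
  · refine Or.inr (le_antisymm hX.1 ?_)
    intro w hw
    exact hX.2 (hX.1 hx) hw hx (hc.preconnected _ _)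

lemma connected_of_clo {D : Set V} (hne : D.Nonempty)
    (h : ∀ X, Clo G D X → X = ∅ ∨ X = D) : (G.induce D).Connected := by
  obtain ⟨d, hd⟩ := hne
  have key : ∀ (x : V) (hx : x ∈ D), (G.induce D).Reachable ⟨d, hd⟩ ⟨x, hx⟩ := by
    intro x hx
    have := h _ (clo_reachClass (G := G) hd)
    rcases this with h' | h'
    · exact absurd (Set.eq_empty_iff_forall_notMem.mp h' d) (by
        intro hcon; exact hcon ⟨hd, Reachable.refl _⟩)
    · rw [← h'] at hx
      obtain ⟨hx', hr⟩ := hx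
      exact hr
  haveI : Nonempty ↥D := ⟨⟨d, hd⟩⟩
  exact ⟨fun a b => ((key a.1 a.2).symm.trans (key b.1 b.2))⟩

section UU
variable (G) in
/-- Union of the components indexed by the `true` coordinates of `f`. -/
def UU (D : Set V) {d : ℕ} (e : Fin d ≃ (G.induce D).ConnectedComponent)
    (f : Fin d → Bool) : Set V :=
  Subtype.val '' (⋃ C ∈ {C | f (e.symm C) = true}, SimpleGraph.ConnectedComponent.supp C)

variable {D : Set V} {d : ℕ} {e : Fin d ≃ (G.induce D).ConnectedComponent}

lemma mem_UU {f : Fin d → Bool} {v : V} :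
    v ∈ UU G D e f ↔ ∃ hv : v ∈ D,
      f (e.symm ((G.induce D).connectedComponentMk ⟨v, hv⟩)) = true :=
  mem_unionSupp

lemma clo_UU (f : Fin d → Bool) : Clo G D (UU G D e f) := clo_unionSupp _

lemma UU_subset {f g : Fin d → Bool} (h : ∀ j, f j = true → g j = true) :
    UU G D e f ⊆ UU G D e g := by
  intro v hv
  obtain ⟨hv', hf⟩ := mem_UU.mp hv
  exact mem_UU.mpr ⟨hv', h _ hf⟩

lemma UU_subset_iff {f g : Fin d → Bool} :
    UU G D e f ⊆ UU G D e g ↔ ∀ j, f j = true → g j = true := by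
  refine ⟨fun h j hf => ?_, UU_subset⟩
  obtain ⟨x, hx⟩ := (e j).exists_rep
  have hx' : (G.induce D).connectedComponentMk x = e j := hx
  have hxf : x.1 ∈ UU G D e f := by
    refine mem_UU.mpr ⟨x.2, ?_⟩
    rw [show ((G.induce D).connectedComponentMk ⟨x.1, x.2⟩) = e j from hx',
      Equiv.symm_apply_apply]
    exact hf
  obtain ⟨hv', hg⟩ := mem_UU.mp (h hxf)
  rwa [show ((G.induce D).connectedComponentMk ⟨x.1, hv'⟩) = e j from hx',
    Equiv.symm_apply_apply] at hg

lemma UU_inj : Function.Injective (UU G D e) := by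
  intro f g hfg
  funext j
  by_contra hne
  obtain ⟨x, hx⟩ := (e j).exists_rep
  have hx' : (G.induce D).connectedComponentMk x = e j := hx
  have hmem : ∀ h : Fin d → Bool, x.1 ∈ UU G D e h ↔ h j = true := by
    intro h
    rw [mem_UU]
    constructor
    · rintro ⟨hv, hh⟩
      rwa [show ((G.induce D).connectedComponentMk ⟨x.1, hv⟩) = e j from hx',
        Equiv.symm_apply_apply] at hh
    · intro hh
      refine ⟨x.2, ?_⟩
      rw [show ((G.induce D).connectedComponentMk ⟨x.1, x.2⟩) = e j from hx',
        Equiv.symm_apply_apply]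
      exact hh
  have := (hmem f).symm.trans (hfg ▸ hmem g)
  cases hf : f j <;> cases hg : g j
  · exact hne (hf.trans hg.symm)
  · exact absurd (this.mpr hg) (by rw [hf]; simp)
  · exact absurd (this.mp hf) (by rw [hg]; simp)
  · exact hne (hf.trans hg.symm)

lemma UU_symmDiff (f g : Fin d → Bool) :
    symmDiff (UU G D e f) (UU G D e g) = UU G D e (fun j => xor (f j) (g j)) := by
  ext v
  rw [Set.mem_symmDiff, mem_UU, mem_UU, mem_UU]
  constructor
  · rintro (⟨⟨hv, hf⟩, hng⟩ | ⟨⟨hv, hg⟩, hnf⟩)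
    · refine ⟨hv, ?_⟩
      have hg' : g (e.symm ((G.induce D).connectedComponentMk ⟨v, hv⟩)) = false := by
        cases h : g (e.symm ((G.induce D).connectedComponentMk ⟨v, hv⟩))
        · rfl
        · exact absurd ⟨hv, h⟩ hng
      rw [hf, hg']; rfl
    · refine ⟨hv, ?_⟩
      have hf' : f (e.symm ((G.induce D).connectedComponentMk ⟨v, hv⟩)) = false := by
        cases h : f (e.symm ((G.induce D).connectedComponentMk ⟨v, hv⟩))
        · rfl
        · exact absurd ⟨hv, h⟩ hnf
      rw [hg, hf']; rfl
  · rintro ⟨hv, hx⟩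
    cases hf : f (e.symm ((G.induce D).connectedComponentMk ⟨v, hv⟩)) <;>
      cases hg : g (e.symm ((G.induce D).connectedComponentMk ⟨v, hv⟩))
    · rw [hf, hg] at hx; exact absurd hx (by simp)
    · refine Or.inr ⟨⟨hv, hg⟩, ?_⟩
      rintro ⟨hv', hf'⟩
      rw [show (⟨v, hv'⟩ : ↥D) = ⟨v, hv⟩ from rfl] at hf'
      rw [hf'] at hf; exact absurd hf (by simp)
    · refine Or.inl ⟨⟨hv, hf⟩, ?_⟩
      rintro ⟨hv', hg'⟩
      rw [show (⟨v, hv'⟩ : ↥D) = ⟨v, hv⟩ from rfl] at hg'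
      rw [hg'] at hg; exact absurd hg (by simp)
    · rw [hf, hg] at hx; exact absurd hx (by simp)

open Classical in
lemma Clo.exists_UU {X : Set V} (hX : Clo G D X) : ∃ f, X = UU G D e f := by
  obtain ⟨S, rfl⟩ := hX.exists_S
  refine ⟨fun j => if e j ∈ S then true else false, ?_⟩
  have hset : {C | (fun j => if e j ∈ S then true else false) (e.symm C) = true} = S := by
    ext C
    simp only [Set.mem_setOf_eq, Equiv.apply_symm_apply]
    by_cases hC : C ∈ S <;> simp [hC]
  unfold UU
  rw [hset]

end UU

section Cubes
variable (G) in
abbrev Stab := {s : Set V // IsStableSet G s}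

variable (G) in
def cubeSet (s t : Stab G) : Set (Stab G) := {u | u.1 ∈ stabCube G s.1 t.1}

lemma mem_cubeSet {s t u : Stab G} :
    u ∈ cubeSet G s t ↔ Clo G (symmDiff s.1 t.1) (symmDiff s.1 u.1) :=
  mem_stabCube_iff

lemma self_mem_cubeSet {s t : Stab G} : s ∈ cubeSet G s t :=
  mem_cubeSet.mpr (by rw [symmDiff_self]; exact clo_empty)

lemma right_mem_cubeSet {s t : Stab G} : t ∈ cubeSet G s t :=
  mem_cubeSet.mpr clo_self

lemma mem_cubeSet_rebase {s t u : Stab G} (hu : u ∈ cubeSet G s t) (w : Stab G) :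
    w ∈ cubeSet G s t ↔ Clo G (symmDiff s.1 t.1) (symmDiff u.1 w.1) := by
  have hX : Clo G (symmDiff s.1 t.1) (symmDiff s.1 u.1) := mem_cubeSet.mp hu
  rw [mem_cubeSet]
  constructor
  · intro h
    have : symmDiff u.1 w.1 = symmDiff (symmDiff s.1 u.1) (symmDiff s.1 w.1) := by
      ext v; simp only [Set.mem_symmDiff]; tauto
    rw [this]; exact hX.symmDiff h
  · intro h
    rw [sd_rot s.1 u.1 w.1]
    exact hX.symmDiff h

variable (G) in
def phiStab (s t : Stab G) {d : ℕ}
    (e : Fin d ≃ (G.induce (symmDiff s.1 t.1)).ConnectedComponent)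
    (f : Fin d → Bool) : Stab G :=
  ⟨symmDiff s.1 (UU G (symmDiff s.1 t.1) e f), stable_clo s.2 t.2 (clo_UU f)⟩

lemma phiStab_inj (s t : Stab G) {d : ℕ}
    (e : Fin d ≃ (G.induce (symmDiff s.1 t.1)).ConnectedComponent) :
    Function.Injective (phiStab G s t e) := by
  intro f g h
  apply UU_inj (e := e)
  have := congrArg Subtype.val h
  simpa [phiStab] using congrArg (fun X => symmDiff s.1 X) this

lemma range_phiStab (s t : Stab G) {d : ℕ}
    (e : Fin d ≃ (G.induce (symmDiff s.1 t.1)).ConnectedComponent) :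
    Set.range (phiStab G s t e) = cubeSet G s t := by
  ext u
  constructor
  · rintro ⟨f, rfl⟩
    refine mem_cubeSet.mpr ?_
    rw [show symmDiff s.1 (phiStab G s t e f).1 = UU G (symmDiff s.1 t.1) e f by
      simp [phiStab, symmDiff_symmDiff_cancel_left]]
    exact clo_UU f
  · intro hu
    obtain ⟨f, hf⟩ := (mem_cubeSet.mp hu).exists_UU (e := e)
    refine ⟨f, ?_⟩
    apply Subtype.ext
    simp only [phiStab, ← hf, symmDiff_symmDiff_cancel_left]

lemma symmDiff_phiStab (s t : Stab G) {d : ℕ}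
    (e : Fin d ≃ (G.induce (symmDiff s.1 t.1)).ConnectedComponent)
    (f g : Fin d → Bool) :
    symmDiff (phiStab G s t e f).1 (phiStab G s t e g).1 =
      UU G (symmDiff s.1 t.1) e (fun j => xor (f j) (g j)) := by
  simp only [phiStab]
  rw [sd_cancel, UU_symmDiff]

lemma phi_image_face (s t : Stab G) {d : ℕ}
    (e : Fin d ≃ (G.induce (symmDiff s.1 t.1)).ConnectedComponent)
    (f₁ f₂ : Fin d → Bool) :
    phiStab G s t e '' {x | ∀ j, xor (f₁ j) (f₂ j) = false → x j = f₁ j} =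
      cubeSet G (phiStab G s t e f₁) (phiStab G s t e f₂) := by
  have hD' : symmDiff (phiStab G s t e f₁).1 (phiStab G s t e f₂).1 =
      UU G (symmDiff s.1 t.1) e (fun j => xor (f₁ j) (f₂ j)) :=
    symmDiff_phiStab s t e f₁ f₂
  have hcloD' : Clo G (symmDiff s.1 t.1)
      (UU G (symmDiff s.1 t.1) e (fun j => xor (f₁ j) (f₂ j))) := clo_UU _
  ext u
  rw [mem_cubeSet, hD']
  constructor
  · rintro ⟨x, hx, rfl⟩
    have hsd : symmDiff (phiStab G s t e f₁).1 (phiStab G s t e x).1 =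
        UU G (symmDiff s.1 t.1) e (fun j => xor (f₁ j) (x j)) := symmDiff_phiStab s t e f₁ x
    rw [hsd]
    refine (clo_trans hcloD').mpr ⟨UU_subset ?_, clo_UU _⟩
    intro j hj
    by_contra hhj
    have hhj' : xor (f₁ j) (f₂ j) = false := by
      cases hcase : xor (f₁ j) (f₂ j)
      · rfl
      · exact absurd hcase hhj
    have := hx j hhj'
    rw [this] at hj
    simp at hj
  · intro hclo
    obtain ⟨hsub, hcloD⟩ := (clo_trans hcloD').mp hclo
    obtain ⟨g, hg⟩ := hcloD.exists_UU (e := e)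
    rw [hg] at hsub
    have hgh : ∀ j, g j = true → xor (f₁ j) (f₂ j) = true := UU_subset_iff.mp hsub
    refine ⟨fun j => xor (f₁ j) (g j), ?_, ?_⟩
    · intro j hj
      have hgj : g j = false := by
        cases hcase : g j
        · rfl
        · rw [hgh j hcase] at hj; exact absurd hj (by simp)
      show xor (f₁ j) (g j) = f₁ j
      rw [hgj]
      simp
    · apply Subtype.ext
      have h1 : (phiStab G s t e (fun j => xor (f₁ j) (g j))).1 =
          symmDiff (phiStab G s t e f₁).1 (UU G (symmDiff s.1 t.1) e g) := by
        simp only [phiStab]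
        rw [sd_assoc', UU_symmDiff]
      rw [h1, ← hg, symmDiff_symmDiff_cancel_left]

open Classical in
lemma isCubeFace_iff {d : ℕ} {F : Set (Fin d → Bool)} :
    IsCubeFace F ↔ ∃ f₁ f₂ : Fin d → Bool,
      F = {x | ∀ j, xor (f₁ j) (f₂ j) = false → x j = f₁ j} := by
  constructor
  · rintro ⟨S₀, a, rfl⟩
    refine ⟨fun j => if j ∈ S₀ then a j else false,
      fun j => if j ∈ S₀ then a j else true, ?_⟩
    ext x
    simp only [Set.mem_setOf_eq]
    constructor
    · intro hx j hj
      by_cases hS : j ∈ S₀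
      · rw [if_pos hS]; exact hx j hS
      · rw [if_neg hS, if_neg hS] at hj
        cases a j <;> simp at hj
    · intro hx j hj
      have := hx j (by rw [if_pos hj, if_pos hj]; simp)
      rwa [if_pos hj] at this
  · rintro ⟨f₁, f₂, rfl⟩
    exact ⟨{j | xor (f₁ j) (f₂ j) = false}, f₁, rfl⟩

lemma cube_structure_cubeSet [Fintype V] (s t : Stab G) :
    ∃ (d : ℕ) (φ : (Fin d → Bool) → Stab G), Function.Injective φ ∧
      Set.range φ = cubeSet G s t ∧
      ∀ F : Set (Fin d → Bool),
        φ '' F ∈ {c | ∃ a b : Stab G, c = cubeSet G a b} ↔ IsCubeFace F := by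
  classical
  haveI : Finite ((G.induce (symmDiff s.1 t.1)).ConnectedComponent) := by infer_instance
  haveI := Fintype.ofFinite ((G.induce (symmDiff s.1 t.1)).ConnectedComponent)
  let e := (Fintype.equivFin ((G.induce (symmDiff s.1 t.1)).ConnectedComponent)).symm
  refine ⟨_, phiStab G s t e, phiStab_inj s t e, range_phiStab s t e, ?_⟩
  intro F
  constructor
  · rintro ⟨a, b, hab⟩
    have ha : a ∈ phiStab G s t e '' F := by rw [hab]; exact self_mem_cubeSet
    have hb : b ∈ phiStab G s t e '' F := by rw [hab]; exact right_mem_cubeSet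
    obtain ⟨f₁, hf₁F, hφ1⟩ := ha
    obtain ⟨f₂, hf₂F, hφ2⟩ := hb
    have himg : phiStab G s t e '' F =
        phiStab G s t e '' {x | ∀ j, xor (f₁ j) (f₂ j) = false → x j = f₁ j} := by
      rw [phi_image_face, hφ1, hφ2, hab]
    have hF := (Set.image_injective.mpr (phiStab_inj s t e)) himg
    exact isCubeFace_iff.mpr ⟨f₁, f₂, hF⟩
  · intro hface
    obtain ⟨f₁, f₂, rfl⟩ := isCubeFace_iff.mp hface
    exact ⟨phiStab G s t e f₁, phiStab G s t e f₂, phi_image_face s t e f₁ f₂⟩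

lemma cube_inter {s₁ t₁ s₂ t₂ u : Stab G}
    (h1 : u ∈ cubeSet G s₁ t₁) (h2 : u ∈ cubeSet G s₂ t₂) :
    ∃ a b : Stab G, cubeSet G s₁ t₁ ∩ cubeSet G s₂ t₂ = cubeSet G a b := by
  set D₁ := symmDiff s₁.1 t₁.1 with hD₁
  set D₂ := symmDiff s₂.1 t₂.1 with hD₂
  set W := ⋃₀ {Z | Clo G D₁ Z ∧ Clo G D₂ Z} with hWdef
  have hW1 : Clo G D₁ W := clo_sUnion (fun Z h => h.1)
  have hW2 : Clo G D₂ W := clo_sUnion (fun Z h => h.2)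
  have hX0 : Clo G D₁ (symmDiff s₁.1 u.1) := mem_cubeSet.mp h1
  have hrw : symmDiff u.1 W = symmDiff s₁.1 (symmDiff (symmDiff s₁.1 u.1) W) := by
    ext v; simp only [Set.mem_symmDiff]; tauto
  have hstable : IsStableSet G (symmDiff u.1 W) :=
    hrw ▸ stable_clo s₁.2 t₁.2 (hX0.symmDiff hW1)
  refine ⟨u, ⟨symmDiff u.1 W, hstable⟩, ?_⟩
  ext w
  rw [Set.mem_inter_iff, mem_cubeSet_rebase h1 w, mem_cubeSet_rebase h2 w,
    mem_cubeSet]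
  rw [show symmDiff u.1 (symmDiff u.1 W) = W from symmDiff_symmDiff_cancel_left _ _]
  constructor
  · rintro ⟨hZ1, hZ2⟩
    exact (clo_trans hW1).mpr ⟨Set.subset_sUnion_of_mem ⟨hZ1, hZ2⟩, hZ1⟩
  · intro hZ
    exact ⟨((clo_trans hW1).mp hZ).2, ((clo_trans hW2).mp hZ).2⟩

lemma cubeSet_pair {v w : Stab G}
    (hconn : (G.induce (symmDiff v.1 w.1)).Connected) :
    cubeSet G v w = {v, w} := by
  ext u
  rw [mem_cubeSet]
  constructor
  · intro h
    rcases clo_eq_of_connected hconn h with h' | h'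
    · left
      apply Subtype.ext
      have : symmDiff v.1 u.1 = ⊥ := h'
      exact (symmDiff_eq_bot.mp this).symm
    · right
      apply Subtype.ext
      have := congrArg (fun X => symmDiff v.1 X) h'
      simpa only [symmDiff_symmDiff_cancel_left] using this
  · rintro (rfl | rfl)
    · rw [symmDiff_self]; exact clo_empty
    · exact clo_self

lemma connected_of_cubeSet_pair {v w s t : Stab G} (hne : v ≠ w)
    (h : ({v, w} : Set (Stab G)) = cubeSet G s t) :
    (G.induce (symmDiff v.1 w.1)).Connected := by
  set D := symmDiff s.1 t.1 with hD
  have hv : v ∈ cubeSet G s t := by rw [← h]; exact Set.mem_insert _ _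
  have hw : w ∈ cubeSet G s t := by rw [← h]; exact Set.mem_insert_iff.mpr (Or.inr rfl)
  set X := symmDiff s.1 v.1 with hX
  set Y := symmDiff s.1 w.1 with hY
  have hXc : Clo G D X := mem_cubeSet.mp hv
  have hYc : Clo G D Y := mem_cubeSet.mp hw
  have hXY : X ≠ Y := by
    intro hxy
    apply hne
    apply Subtype.ext
    have := congrArg (fun Z => symmDiff s.1 Z) hxy
    simpa only [hX, hY, symmDiff_symmDiff_cancel_left] using this
  have hclo_sub : ∀ Z, Clo G D Z → Z = X ∨ Z = Y := by
    intro Z hZ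
    have hmem : (⟨symmDiff s.1 Z, stable_clo s.2 t.2 hZ⟩ : Stab G) ∈ cubeSet G s t := by
      rw [mem_cubeSet]
      rw [show symmDiff s.1 (symmDiff s.1 Z) = Z from symmDiff_symmDiff_cancel_left _ _]
      exact hZ
    rw [← h] at hmem
    rcases hmem with h' | h'
    · left
      have := congrArg Subtype.val h'
      simp only at this
      rw [hX, ← this, symmDiff_symmDiff_cancel_left]
    · right
      have := congrArg Subtype.val h'
      simp only at this
      rw [hY, ← this, symmDiff_symmDiff_cancel_left]
  have hvw : symmDiff v.1 w.1 = symmDiff X Y := by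
    ext z; simp only [hX, hY, Set.mem_symmDiff]; tauto
  have hDne : D ≠ ∅ := by
    intro hDe
    apply hXY
    have h1 : X = ∅ := Set.subset_eq_empty (hDe ▸ hXc.1) rfl
    have h2 : Y = ∅ := Set.subset_eq_empty (hDe ▸ hYc.1) rfl
    rw [h1, h2]
  have hEm := hclo_sub ∅ clo_empty
  have hDD := hclo_sub D clo_self
  have hXYD : symmDiff X Y = D := by
    rcases hEm with h1 | h1 <;> rcases hDD with h2 | h2
    · exact absurd (h2.trans h1.symm) hDne
    · rw [← h1, ← h2]
      ext z; simp [Set.mem_symmDiff]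
    · rw [← h1, ← h2]
      ext z; simp [Set.mem_symmDiff]
    · exact absurd (h2.trans h1.symm) hDne
  rw [hvw, hXYD]
  apply connected_of_clo (Set.nonempty_iff_ne_empty.mpr hDne)
  intro Z hZ
  have hc := hclo_sub Z hZ
  rcases hEm with h1 | h1 <;> rcases hDD with h2 | h2
  · exact absurd (h2.trans h1.symm) hDne
  · rcases hc with h3 | h3
    · exact Or.inl (h3.trans h1.symm)
    · exact Or.inr (h3.trans h2.symm)
  · rcases hc with h3 | h3
    · exact Or.inr (h3.trans h2.symm)
    · exact Or.inl (h3.trans h1.symm)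
  · exact absurd (h2.trans h1.symm) hDne

end Cubes
end Aux

/-- For every finite graph `G` there is a neighbourly abstract cubical complex on the
stable sets of `G` whose graph is the graph of the stable set polytope `STAB(G)`;
explicitly, its cubes are the cubes `c_{st}` spanned by pairs of stable sets `s, t`. -/
theorem stableSetGraph_is_graph_of_neighbourly_cubical_complex
    {V : Type*} [Fintype V] (G : SimpleGraph V) :
    ∃ K : AbstractCubicalComplex {s : Set V // IsStableSet G s},
      IsNeighbourly K ∧ complexGraph K = stableSetGraph G ∧
      K.cubes = {c | ∃ s t : {s : Set V // IsStableSet G s},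
        c = {u : {s : Set V // IsStableSet G s} | u.1 ∈ stabCube G s.1 t.1}} := by
  classical
  refine ⟨⟨{c | ∃ s t : Stab G, c = cubeSet G s t}, ?_, ?_⟩, ?_, ?_, rfl⟩
  · -- inter_closed
    rintro c₁ ⟨s₁, t₁, rfl⟩ c₂ ⟨s₂, t₂, rfl⟩
    rcases Set.eq_empty_or_nonempty (cubeSet G s₁ t₁ ∩ cubeSet G s₂ t₂) with he | ⟨u, h1, h2⟩
    · exact Or.inl he
    · right
      obtain ⟨a, b, hab⟩ := cube_inter h1 h2
      exact ⟨a, b, hab⟩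
  · -- cube_structure
    rintro c ⟨s, t, rfl⟩
    exact cube_structure_cubeSet s t
  · -- neighbourly
    intro v w
    exact ⟨cubeSet G v w, ⟨v, w, rfl⟩, self_mem_cubeSet, right_mem_cubeSet⟩
  · -- graph equality
    ext v w
    show (v ≠ w ∧ _) ↔ (v ≠ w ∧ _)
    constructor
    · rintro ⟨hne, s, t, hc⟩
      exact ⟨hne, connected_of_cubeSet_pair hne hc⟩
    · rintro ⟨hne, hconn⟩
      exact ⟨hne, v, w, (cubeSet_pair hconn).symm⟩
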